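/- Let $(X_1, X_2)$ be uniformly distributed on the ellipse $A = \{x \in \mathbb{R}^2 : x^T K x \le 1\}$ where $K$ is a symmetric positive definite $2\times 2$ matrix. Then the mutual information is $I(X_1; X_2) = \log_2\big( \pi e^{-1} \sqrt{K_{11} K_{22} / \det K} \big)$. -/

import Mathlib

open MeasureTheory Set Matrix Real intervalIntegral

lemma logsin_intable : IntervalIntegrable (fun x => log (sin x)) volume 0 (π/2) := by
  rw [intervalIntegrable_iff, uIoc_of_le (by positivity : (0:ℝ) ≤ π/2)]
  apply Integrable.mono' (g := fun x => log (π/2) + 2 * x ^ (-(1/2) : ℝ))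
  · exact (intervalIntegrable_const.add
      ((intervalIntegrable_rpow' (by norm_num)).const_mul 2)).1
  · exact (Real.measurable_log.comp Real.continuous_sin.measurable).aestronglyMeasurable
  · filter_upwards [ae_restrict_mem measurableSet_Ioc] with x hx
    have hx0 : 0 < x := hx.1
    have hsin_pos : 0 < sin x := Real.sin_pos_of_pos_of_lt_pi hx0
      (lt_of_le_of_lt hx.2 (by linarith [Real.pi_pos]))
    have h1 : log (sin x) ≤ 0 := Real.log_nonpos hsin_pos.le (Real.sin_le_one x)
    have h2 : 2/π * x ≤ sin x := Real.mul_le_sin hx0.le hx.2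
    have hpi : 0 < π := Real.pi_pos
    have h3 : log (2/π * x) ≤ log (sin x) := Real.log_le_log (by positivity) h2
    have h4 : log (2/π * x) = log (2/π) + log x := Real.log_mul (by positivity) hx0.ne'
    have h5 : -log x ≤ 2 * x ^ (-(1/2) : ℝ) := by
      have hy : (0:ℝ) < x ^ (-(1/2) : ℝ) := Real.rpow_pos_of_pos hx0 _
      have := Real.log_le_sub_one_of_pos hy
      rw [Real.log_rpow hx0] at this
      nlinarith
    have h6 : log (2/π) = - log (π/2) := by
      rw [← Real.log_inv]; norm_num
    rw [Real.norm_eq_abs, abs_of_nonpos h1]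
    nlinarith

lemma logcos_intable : IntervalIntegrable (fun x => log (cos x)) volume 0 (π/2) := by
  have h := (logsin_intable.comp_sub_left (π/2)).symm
  simp only [Real.sin_pi_div_two_sub] at h
  simpa using h

lemma logsin_intable' : IntervalIntegrable (fun x => log (sin x)) volume (π/2) π := by
  have h := (logsin_intable.comp_sub_left π).symm
  simp only [Real.sin_pi_sub] at h
  have h2 : π - π/2 = π/2 := by ring
  have h3 : π - 0 = π := by ring
  rw [h2, h3] at h
  exact h

lemma integral_log_sin_half : ∫ x in (0:ℝ)..(π/2), log (sin x) = -(π/2) * log 2 := by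
  set A := ∫ x in (0:ℝ)..(π/2), log (sin x) with hA
  have hBA : ∫ x in (0:ℝ)..(π/2), log (cos x) = A := by
    have h := integral_comp_sub_left (a := 0) (b := π/2) (fun x => log (sin x)) (π/2)
    simp only [Real.sin_pi_div_two_sub] at h
    simpa using h
  have h2 : ∫ x in (π/2)..π, log (sin x) = A := by
    have h := integral_comp_sub_left (a := 0) (b := π/2) (fun x => log (sin x)) π
    simp only [Real.sin_pi_sub] at h
    rw [show π - π/2 = π/2 by ring, show π - 0 = π by ring] at h
    exact h.symm
  have hS : ∫ x in (0:ℝ)..π, log (sin x) = 2*A := by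
    rw [← integral_add_adjacent_intervals logsin_intable logsin_intable', h2]
    ring
  have hdouble : ∫ x in (0:ℝ)..(π/2), log (sin (2*x)) = A := by
    have h := integral_comp_mul_left (a := 0) (b := π/2) (fun x => log (sin x))
      (c := 2) two_ne_zero
    rw [show (2:ℝ) * (π/2) = π by ring, show (2:ℝ) * 0 = 0 by ring, hS] at h
    rw [h]; ring_nf
  have hae : {(π/2 : ℝ)}ᶜ ∈ ae (volume : Measure ℝ) :=
    compl_mem_ae_iff.2 (measure_singleton _)
  have hsplit : ∫ x in (0:ℝ)..(π/2), log (sin (2*x))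
      = ∫ x in (0:ℝ)..(π/2), (log 2 + log (sin x) + log (cos x)) := by
    apply intervalIntegral.integral_congr_ae
    filter_upwards [hae] with x hx hxI
    have hne : x ≠ π/2 := hx
    rw [uIoc_of_le (by positivity : (0:ℝ) ≤ π/2)] at hxI
    have hx1 : 0 < x := hxI.1
    have hx2 : x < π/2 := lt_of_le_of_ne hxI.2 hne
    have hsin : 0 < sin x := Real.sin_pos_of_pos_of_lt_pi hx1 (by linarith [Real.pi_pos])
    have hcos : 0 < cos x := Real.cos_pos_of_mem_Ioo ⟨by linarith [Real.pi_pos], hx2⟩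
    rw [Real.sin_two_mul, Real.log_mul (by positivity) hcos.ne',
      Real.log_mul (by norm_num) hsin.ne']
    try ring
  have hInt : ∫ x in (0:ℝ)..(π/2), (log 2 + log (sin x) + log (cos x))
      = (π/2) * log 2 + A + A := by
    rw [integral_add (intervalIntegrable_const.add logsin_intable) logcos_intable,
      integral_add intervalIntegrable_const logsin_intable, hBA]
    simp
    rfl
  have := hdouble
  rw [hsplit, hInt] at this
  linarith

lemma logcos_intable_symm : IntervalIntegrable (fun x => log (cos x)) volume (-(π/2)) (π/2) := by
  apply IntervalIntegrable.trans (b := 0)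
  · have h := (logcos_intable.comp_sub_left 0).symm
    simp only [zero_sub] at h
    have h' : (fun x : ℝ => log (cos (-x))) = fun x => log (cos x) := by
      funext x; rw [Real.cos_neg]
    rw [h'] at h
    simpa using h
  · exact logcos_intable

lemma integral_log_cos_symm : ∫ x in (-(π/2))..(π/2), log (cos x) = -π * log 2 := by
  have hL : ∫ x in (-(π/2))..(0:ℝ), log (cos x) = -(π/2) * log 2 := by
    have h := integral_comp_neg (a := 0) (b := π/2) (fun x => log (cos x))
    simp only [Real.cos_neg, neg_zero] at h
    have hBA : ∫ x in (0:ℝ)..(π/2), log (cos x) = -(π/2) * log 2 := by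
      have h2 := integral_comp_sub_left (a := 0) (b := π/2) (fun x => log (sin x)) (π/2)
      simp only [Real.sin_pi_div_two_sub] at h2
      simp only [sub_zero, sub_self] at h2
      rw [h2]; exact integral_log_sin_half
    rw [← h, hBA]
  have hpi := Real.pi_pos
  have i1 : IntervalIntegrable (fun x => log (cos x)) volume (-(π/2)) 0 :=
    logcos_intable_symm.mono_set (by
      rw [uIcc_of_le (by linarith), uIcc_of_le (by linarith)]
      exact Icc_subset_Icc le_rfl (by linarith))
  have i2 : IntervalIntegrable (fun x => log (cos x)) volume 0 (π/2) := logcos_intable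
  rw [← integral_add_adjacent_intervals (a := -(π/2)) (b := 0) (c := π/2) i1 i2, hL,
    show (∫ x in (0:ℝ)..(π/2), log (cos x)) = -(π/2) * log 2 from by
      have h2 := integral_comp_sub_left (a := 0) (b := π/2) (fun x => log (sin x)) (π/2)
      simp only [Real.sin_pi_div_two_sub, sub_zero, sub_self] at h2
      rw [h2]; exact integral_log_sin_half]
  ring

lemma cont_coslogcos : Continuous (fun x : ℝ => cos x * log (cos x)) :=
  Real.continuous_mul_log.comp Real.continuous_cos

lemma integral_two_cos_sq_log_cos :
    ∫ x in (-(π/2))..(π/2), 2 * cos x ^ 2 * log (cos x) = π/2 - π * log 2 := by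
  have hpi := Real.pi_pos
  set F : ℝ → ℝ := fun θ => sin θ * (cos θ * log (cos θ)) with hF
  set f' : ℝ → ℝ := fun θ => (2 * cos θ ^ 2 - 1) * log (cos θ) - sin θ ^ 2 with hf'
  have hf'eq : f' = fun x => 2 * (cos x * (cos x * log (cos x))) - log (cos x) - sin x ^ 2 := by
    funext x; simp only [hf']; ring
  have hf'int : IntervalIntegrable f' volume (-(π/2)) (π/2) := by
    rw [hf'eq]
    exact (((continuous_const.mul (Real.continuous_cos.mul cont_coslogcos)).intervalIntegrable _ _).sub
      logcos_intable_symm).sub ((Real.continuous_sin.pow 2).intervalIntegrable _ _)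
  have hFTC : ∫ x in (-(π/2))..(π/2), f' x = F (π/2) - F (-(π/2)) := by
    apply integral_eq_sub_of_hasDeriv_right_of_le (by linarith)
    · exact (Real.continuous_sin.mul cont_coslogcos).continuousOn
    · intro x hx
      have hcos : 0 < cos x := Real.cos_pos_of_mem_Ioo ⟨hx.1, hx.2⟩
      have hlog : HasDerivAt (fun θ : ℝ => log (cos θ)) ((cos x)⁻¹ * (-sin x)) x :=
        (Real.hasDerivAt_log hcos.ne').comp x (Real.hasDerivAt_cos x)
      have h1 : HasDerivAt (fun θ : ℝ => cos θ * log (cos θ))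
          (-sin x * log (cos x) + cos x * ((cos x)⁻¹ * (-sin x))) x :=
        (Real.hasDerivAt_cos x).mul hlog
      have h2 := (Real.hasDerivAt_sin x).fun_mul h1
      apply HasDerivAt.hasDerivWithinAt
      convert h2 using 1
      · rfl
      simp only [hf']
      field_simp
      linear_combination (log (cos x)) * Real.sin_sq_add_cos_sq x
    · exact hf'int
  have hFval : F (π/2) - F (-(π/2)) = 0 := by
    simp [hF, Real.cos_pi_div_two]
  have hsin2 : ∫ x in (-(π/2))..(π/2), sin x ^ 2 = π/2 := by
    rw [integral_sin_sq]
    simp [Real.cos_pi_div_two]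
    try ring
  have hrw : (fun x : ℝ => 2 * cos x ^ 2 * log (cos x))
      = fun x => f' x + (log (cos x) + sin x ^ 2) := by
    funext x; simp only [hf']; ring
  rw [hrw, integral_add hf'int (logcos_intable_symm.add
    ((Real.continuous_sin.pow 2).intervalIntegrable _ _)) (g := fun x => log (cos x) + sin x ^ 2),
    integral_add logcos_intable_symm ((Real.continuous_sin.pow 2).intervalIntegrable _ _) (g := fun x => sin x ^ 2),
    hFTC, hFval, integral_log_cos_symm, hsin2]
  ring

lemma cont_sqrt_log : Continuous (fun u : ℝ => Real.sqrt (1 - u^2) * log (1 - u^2)) := by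
  have h : (fun u : ℝ => Real.sqrt (1 - u^2) * log (1 - u^2))
      = fun u => 2 * (Real.sqrt (1 - u^2) * log (Real.sqrt (1 - u^2))) := by
    funext u
    rcases le_or_gt (1 - u^2) 0 with h | h
    · rw [Real.sqrt_eq_zero'.mpr h]; ring
    · rw [Real.log_sqrt h.le]; ring
  rw [h]
  exact continuous_const.mul (Real.continuous_mul_log.comp (Real.continuous_sqrt.comp (by continuity)))

lemma integral_sqrt_mul_log :
    ∫ u in (-1:ℝ)..1, Real.sqrt (1 - u^2) * log (1 - u^2) = π/2 - π * log 2 := by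
  have hpi := Real.pi_pos
  have hsub := integral_comp_smul_deriv (a := -(π/2)) (b := π/2)
    (f := Real.sin) (f' := Real.cos) (g := fun u => Real.sqrt (1 - u^2) * log (1 - u^2))
    (fun x _ => Real.hasDerivAt_sin x) Real.continuous_cos.continuousOn cont_sqrt_log
  rw [Real.sin_pi_div_two, Real.sin_neg, Real.sin_pi_div_two] at hsub
  rw [← hsub, ← integral_two_cos_sq_log_cos]
  apply integral_congr
  intro x hx
  rw [uIcc_of_le (by linarith)] at hx
  have hcos : 0 ≤ cos x := Real.cos_nonneg_of_mem_Icc hx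
  have h1 : 1 - sin x ^ 2 = cos x ^ 2 := by
    have := Real.sin_sq_add_cos_sq x; linarith
  simp only [Function.comp, smul_eq_mul, h1]
  rw [Real.sqrt_sq hcos, Real.log_pow]
  push_cast
  ring

lemma sqrt_zero_outside {a t : ℝ} (ha : 0 < a) (ht : t ∉ Ioc (-a) a) :
    Real.sqrt (a^2 - t^2) = 0 := by
  apply Real.sqrt_eq_zero'.mpr
  rw [mem_Ioc, not_and_or, not_lt, not_le] at ht
  rcases ht with h | h
  · nlinarith
  · nlinarith

lemma real_to_interval {g : ℝ → ℝ} (a : ℝ) (ha : 0 < a)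
    (h0 : ∀ t, t ∉ Ioc (-a) a → g t = 0) :
    ∫ t : ℝ, g t = ∫ t in (-a)..a, g t := by
  rw [integral_of_le (by linarith), ← setIntegral_eq_integral_of_forall_compl_eq_zero h0]

lemma integral_sqrt_sq_sub (a : ℝ) (ha : 0 < a) :
    ∫ t : ℝ, Real.sqrt (a^2 - t^2) = π * a^2 / 2 := by
  rw [real_to_interval a ha (fun t ht => sqrt_zero_outside ha ht)]
  have h := integral_comp_mul_left (a := -1) (b := 1)
    (fun t => Real.sqrt (a^2 - t^2)) (c := a) ha.ne'
  rw [mul_neg_one, mul_one] at h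
  have h2 : ∀ x : ℝ, Real.sqrt (a^2 - (a*x)^2) = a * Real.sqrt (1 - x^2) := by
    intro x
    rw [show a^2 - (a*x)^2 = a^2 * (1 - x^2) by ring, Real.sqrt_mul (sq_nonneg a),
      Real.sqrt_sq ha.le]
  simp only [h2] at h
  rw [intervalIntegral.integral_const_mul, integral_sqrt_one_sub_sq] at h
  rw [(inv_smul_eq_iff₀ ha.ne').mp h.symm, smul_eq_mul]; ring

lemma integral_sqrt_sq_sub_log (a : ℝ) (ha : 0 < a) :
    ∫ t : ℝ, Real.sqrt (a^2 - t^2) * log (a^2 - t^2)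
      = π * a^2 * (log a + 1/2 - log 2) := by
  rw [real_to_interval a ha (fun t ht => by rw [sqrt_zero_outside ha ht, zero_mul])]
  have h := integral_comp_mul_left (a := -1) (b := 1)
    (fun t => Real.sqrt (a^2 - t^2) * log (a^2 - t^2)) (c := a) ha.ne'
  rw [mul_neg_one, mul_one] at h
  have h2 : ∀ x : ℝ, Real.sqrt (a^2 - (a*x)^2) * log (a^2 - (a*x)^2)
      = a * (Real.sqrt (1 - x^2) * (log (a^2) + log (1 - x^2))) := by
    intro x
    rw [show a^2 - (a*x)^2 = a^2 * (1 - x^2) by ring, Real.sqrt_mul (sq_nonneg a),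
      Real.sqrt_sq ha.le]
    rcases eq_or_ne (1 - x^2) 0 with h0 | h0
    · rw [h0]; simp
    · rw [Real.log_mul (by positivity) h0]; ring
  simp only [h2] at h
  rw [intervalIntegral.integral_const_mul] at h
  have hsplit : ∫ x in (-1:ℝ)..1, Real.sqrt (1 - x^2) * (log (a^2) + log (1 - x^2))
      = log (a^2) * (π/2) + (π/2 - π * log 2) := by
    have hmul : (fun x : ℝ => Real.sqrt (1 - x^2) * (log (a^2) + log (1 - x^2)))
        = fun x => log (a^2) * Real.sqrt (1 - x^2) + Real.sqrt (1 - x^2) * log (1 - x^2) := by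
      funext x; ring
    rw [hmul, intervalIntegral.integral_add, intervalIntegral.integral_const_mul, integral_sqrt_one_sub_sq,
      integral_sqrt_mul_log]
    · exact (((continuous_const.sub (continuous_pow 2)).sqrt).intervalIntegrable _ _).const_mul _
    · exact cont_sqrt_log.intervalIntegrable _ _
  rw [hsplit] at h
  rw [(inv_smul_eq_iff₀ ha.ne').mp h.symm, smul_eq_mul, show a^2 = a^(2:ℕ) by norm_num,
    Real.log_pow]
  push_cast
  ring


lemma cont_sqrt_log' (a : ℝ) :
    Continuous (fun t : ℝ => Real.sqrt (a^2 - t^2) * log (a^2 - t^2)) := by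
  have h : (fun t : ℝ => Real.sqrt (a^2 - t^2) * log (a^2 - t^2))
      = fun t => 2 * (Real.sqrt (a^2 - t^2) * log (Real.sqrt (a^2 - t^2))) := by
    funext t
    rcases le_or_gt (a^2 - t^2) 0 with h | h
    · rw [Real.sqrt_eq_zero'.mpr h]; ring
    · rw [Real.log_sqrt h.le]; ring
  rw [h]
  exact continuous_const.mul
    (Real.continuous_mul_log.comp (Real.continuous_sqrt.comp (by continuity)))

lemma integrable_sqrt_sq_sub (a : ℝ) (ha : 0 < a) :
    Integrable (fun t : ℝ => Real.sqrt (a^2 - t^2)) := by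
  apply Continuous.integrable_of_hasCompactSupport (by continuity)
  apply HasCompactSupport.intro (isCompact_Icc (a := -a) (b := a))
  intro t ht
  exact sqrt_zero_outside ha (fun hmem => ht ⟨hmem.1.le, hmem.2⟩)

lemma integrable_sqrt_sq_sub_log (a : ℝ) (ha : 0 < a) :
    Integrable (fun t : ℝ => Real.sqrt (a^2 - t^2) * log (a^2 - t^2)) := by
  apply Continuous.integrable_of_hasCompactSupport (cont_sqrt_log' a)
  apply HasCompactSupport.intro (isCompact_Icc (a := -a) (b := a))
  intro t ht
  rw [sqrt_zero_outside ha (fun hmem => ht ⟨hmem.1.le, hmem.2⟩), zero_mul]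

lemma entropy_semicircle (a : ℝ) (ha : 0 < a) :
    ∫ t : ℝ, (2 / (π * a^2) * Real.sqrt (a^2 - t^2))
        * log (2 / (π * a^2) * Real.sqrt (a^2 - t^2))
      = 1/2 - log (π * a) := by
  have hpi := Real.pi_pos
  set c : ℝ := 2 / (π * a^2) with hc
  have hc0 : 0 < c := by positivity
  have hpt : (fun t : ℝ => (c * Real.sqrt (a^2 - t^2)) * log (c * Real.sqrt (a^2 - t^2)))
      = fun t => (log c * c) * Real.sqrt (a^2 - t^2)
        + (c/2) * (Real.sqrt (a^2 - t^2) * log (a^2 - t^2)) := by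
    funext t
    rcases le_or_gt (a^2 - t^2) 0 with h | h
    · rw [Real.sqrt_eq_zero'.mpr h]; ring
    · have hs : Real.sqrt (a^2 - t^2) ≠ 0 := by
        rw [Real.sqrt_ne_zero']; exact h
      rw [Real.log_mul hc0.ne' hs, Real.log_sqrt h.le]
      ring
  rw [hpt, integral_add (((integrable_sqrt_sq_sub a ha).const_mul _))
    ((integrable_sqrt_sq_sub_log a ha).const_mul _), MeasureTheory.integral_const_mul, MeasureTheory.integral_const_mul,
    integral_sqrt_sq_sub a ha, integral_sqrt_sq_sub_log a ha]
  have hcval : c * (π * a^2 / 2) = 1 := by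
    rw [hc]; field_simp
  have hlogc : log c = log 2 - log π - 2 * log a := by
    rw [hc, Real.log_div (by norm_num) (by positivity), Real.log_mul hpi.ne' (by positivity),
      show a^2 = a^(2:ℕ) by norm_num, Real.log_pow]
    push_cast; ring
  have hlogpa : log (π * a) = log π + log a := Real.log_mul hpi.ne' ha.ne'
  calc log c * c * (π * a^2/2) + c/2 * (π * a^2 * (log a + 1/2 - log 2))
      = log c * (c * (π * a^2/2)) + (c * (π * a^2/2)) * (log a + 1/2 - log 2) := by ring
    _ = 1/2 - log (π * a) := by rw [hcval, hlogc, hlogpa]; ring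

lemma slice_vol (k c e : ℝ) (hk : 0 < k) :
    volume {s : ℝ | k * (s + c)^2 ≤ e} = ENNReal.ofReal (2 * Real.sqrt (e / k)) := by
  rcases lt_or_ge e 0 with he | he
  · have hempty : {s : ℝ | k * (s + c)^2 ≤ e} = ∅ := by
      apply eq_empty_iff_forall_notMem.mpr
      intro s hs
      simp only [mem_setOf_eq] at hs
      nlinarith [sq_nonneg (s + c)]
    rw [hempty, measure_empty, Real.sqrt_eq_zero'.mpr (div_nonpos_of_nonpos_of_nonneg he.le hk.le : e / k ≤ 0)]
    simp
  · have hek : 0 ≤ e / k := div_nonneg he hk.le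
    have hset : {s : ℝ | k * (s + c)^2 ≤ e}
        = Icc (-c - Real.sqrt (e/k)) (-c + Real.sqrt (e/k)) := by
      ext s
      simp only [mem_setOf_eq, mem_Icc]
      constructor
      · intro h
        have h1 : (s + c)^2 ≤ e / k := by
          rw [le_div_iff₀ hk]; linarith [mul_comm k ((s+c)^2)]
        have h2 : |s + c| ≤ Real.sqrt (e/k) := Real.abs_le_sqrt h1
        rw [abs_le] at h2
        constructor <;> linarith [h2.1, h2.2]
      · intro ⟨h1, h2⟩
        have h3 : |s + c| ≤ Real.sqrt (e/k) := abs_le.mpr ⟨by linarith, by linarith⟩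
        have h4 : (s + c)^2 ≤ e / k := by
          rw [← Real.sq_sqrt hek]
          rw [← sq_abs]
          exact pow_le_pow_left₀ (abs_nonneg _) h3 2
        rw [le_div_iff₀ hk] at h4
        linarith [h4]
    rw [hset, Real.volume_Icc]
    congr 1
    ring

lemma vol_eq_lintegral (A : Set (Fin 2 → ℝ)) (hA : MeasurableSet A) :
    volume A = ∫⁻ t : ℝ, volume {s : ℝ | (![t, s] : Fin 2 → ℝ) ∈ A} := by
  have hmp := (MeasureTheory.volume_preserving_finTwoArrow ℝ).symm
    (MeasurableEquiv.finTwoArrow (α := ℝ))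
  rw [← hmp.measure_preimage hA.nullMeasurableSet,
    Measure.volume_eq_prod,
    Measure.prod_apply (MeasurableEquiv.finTwoArrow.symm.measurable hA)]
  rfl

lemma sqrt_div_sq (k : ℝ) (hk : 0 < k) (x : ℝ) :
    Real.sqrt (x / k^2) = Real.sqrt x / k := by
  rcases le_or_gt 0 x with hx | hx
  · rw [Real.sqrt_div hx, Real.sqrt_sq hk.le]
  · rw [Real.sqrt_eq_zero'.mpr (div_nonpos_of_nonpos_of_nonneg hx.le (sq_nonneg k)),
      Real.sqrt_eq_zero'.mpr hx.le, zero_div]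



set_option maxHeartbeats 2000000 in
theorem ellipse_mutual_information (K : Matrix (Fin 2) (Fin 2) ℝ) (hK : K.PosDef) :
    let A : Set (Fin 2 → ℝ) := {x | x ⬝ᵥ K.mulVec x ≤ 1}
    let f₁ : ℝ → ℝ := fun t =>
      (volume {s : ℝ | (![t, s] : Fin 2 → ℝ) ∈ A}).toReal / (volume A).toReal
    let f₂ : ℝ → ℝ := fun t =>
      (volume {s : ℝ | (![s, t] : Fin 2 → ℝ) ∈ A}).toReal / (volume A).toReal
    (-∫ t, f₁ t * Real.logb 2 (f₁ t)) + (-∫ t, f₂ t * Real.logb 2 (f₂ t))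
        - Real.logb 2 (volume A).toReal
      = Real.logb 2 (π * (Real.exp 1)⁻¹ * Real.sqrt (K 0 0 * K 1 1 / K.det)) := by
  intro A f₁ f₂
  have hpi := Real.pi_pos
  -- matrix facts
  have hsym : K 1 0 = K 0 1 := by
    have h := hK.1
    have := congrFun (congrFun h 0) 1
    simpa [Matrix.conjTranspose_apply] using this
  have h00 : 0 < K 0 0 := by
    have h := hK.dotProduct_mulVec_pos (x := ![1, 0]) (by
      intro hx
      have := congrFun hx 0
      simp at this)
    simpa [dotProduct, Matrix.mulVec, Fin.sum_univ_two] using h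
  have h11 : 0 < K 1 1 := by
    have h := hK.dotProduct_mulVec_pos (x := ![0, 1]) (by
      intro hx
      have := congrFun hx 1
      simp at this)
    simpa [dotProduct, Matrix.mulVec, Fin.sum_univ_two] using h
  have hdet : 0 < K.det := hK.det_pos
  have hdet2 : K.det = K 0 0 * K 1 1 - K 0 1 * K 0 1 := by
    rw [Matrix.det_fin_two, hsym]
  set D : ℝ := K.det with hD
  have hq : ∀ x : Fin 2 → ℝ, x ⬝ᵥ K.mulVec x
      = K 0 0 * (x 0)^2 + 2 * K 0 1 * (x 0 * x 1) + K 1 1 * (x 1)^2 := by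
    intro x
    simp [dotProduct, Matrix.mulVec, Fin.sum_univ_two, hsym]
    ring
  have hAdef : A = {x : Fin 2 → ℝ | x ⬝ᵥ K.mulVec x ≤ 1} := rfl
  have hAmeas : MeasurableSet A := by
    rw [hAdef]
    have : Continuous fun x : Fin 2 → ℝ => x ⬝ᵥ K.mulVec x := by
      have : (fun x : Fin 2 → ℝ => x ⬝ᵥ K.mulVec x)
          = fun x => K 0 0 * (x 0)^2 + 2 * K 0 1 * (x 0 * x 1) + K 1 1 * (x 1)^2 := by
        funext x; exact hq x
      rw [this]
      fun_prop
    exact (isClosed_le this continuous_const).measurableSet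
  set a : ℝ := Real.sqrt (K 1 1 / D) with haa
  set b : ℝ := Real.sqrt (K 0 0 / D) with hbb
  have ha : 0 < a := Real.sqrt_pos.mpr (by positivity)
  have hb : 0 < b := Real.sqrt_pos.mpr (by positivity)
  have ha2 : a^2 = K 1 1 / D := Real.sq_sqrt (by positivity)
  have hb2 : b^2 = K 0 0 / D := Real.sq_sqrt (by positivity)
  have hsD : Real.sqrt D * Real.sqrt D = D := Real.mul_self_sqrt hdet.le
  have hsD0 : 0 < Real.sqrt D := Real.sqrt_pos.mpr hdet
  -- slice volumes
  have hv1 : ∀ t : ℝ, volume {s : ℝ | (![t, s] : Fin 2 → ℝ) ∈ A}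
      = ENNReal.ofReal ((2 * Real.sqrt D / K 1 1) * Real.sqrt (a^2 - t^2)) := by
    intro t
    have hset : {s : ℝ | (![t, s] : Fin 2 → ℝ) ∈ A}
        = {s : ℝ | K 1 1 * (s + K 0 1 * t / K 1 1)^2
            ≤ 1 - K 0 0 * t^2 + (K 0 1 * t)^2 / K 1 1} := by
      ext s
      rw [hAdef]
      simp only [mem_setOf_eq, hq ![t, s], Matrix.cons_val_zero, Matrix.cons_val_one,
        Matrix.head_cons]
      have key : K 1 1 * (s + K 0 1 * t / K 1 1)^2
          = K 1 1 * s^2 + 2 * K 0 1 * (t * s) + (K 0 1 * t)^2 / K 1 1 := by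
        field_simp; ring
      rw [key]
      constructor <;> intro h <;> nlinarith
    rw [hset, slice_vol _ _ _ h11]
    congr 1
    have hD0 : K 0 0 * K 1 1 - K 0 1 * K 0 1 ≠ 0 := by rw [← hdet2]; exact hdet.ne'
    have he : (1 - K 0 0 * t^2 + (K 0 1 * t)^2 / K 1 1) / K 1 1
        = (D * (a^2 - t^2)) / (K 1 1)^2 := by
      rw [ha2, hdet2]
      have hD0' : K 0 0 * K 1 1 - K 0 1 ^ 2 ≠ 0 := by rw [sq]; exact hD0
      field_simp
      ring
    rw [he, show (D * (a^2 - t^2)) / (K 1 1)^2 = (D * (a^2 - t^2)) / (K 1 1)^2 from rfl,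
      sqrt_div_sq _ h11, Real.sqrt_mul hdet.le]
    ring
  have hv2 : ∀ t : ℝ, volume {s : ℝ | (![s, t] : Fin 2 → ℝ) ∈ A}
      = ENNReal.ofReal ((2 * Real.sqrt D / K 0 0) * Real.sqrt (b^2 - t^2)) := by
    intro t
    have hset : {s : ℝ | (![s, t] : Fin 2 → ℝ) ∈ A}
        = {s : ℝ | K 0 0 * (s + K 0 1 * t / K 0 0)^2
            ≤ 1 - K 1 1 * t^2 + (K 0 1 * t)^2 / K 0 0} := by
      ext s
      rw [hAdef]
      simp only [mem_setOf_eq, hq ![s, t], Matrix.cons_val_zero, Matrix.cons_val_one,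
        Matrix.head_cons]
      have key : K 0 0 * (s + K 0 1 * t / K 0 0)^2
          = K 0 0 * s^2 + 2 * K 0 1 * (s * t) + (K 0 1 * t)^2 / K 0 0 := by
        field_simp; ring
      rw [key]
      constructor <;> intro h <;> nlinarith
    rw [hset, slice_vol _ _ _ h00]
    congr 1
    have hD0 : K 0 0 * K 1 1 - K 0 1 * K 0 1 ≠ 0 := by rw [← hdet2]; exact hdet.ne'
    have he : (1 - K 1 1 * t^2 + (K 0 1 * t)^2 / K 0 0) / K 0 0
        = (D * (b^2 - t^2)) / (K 0 0)^2 := by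
      rw [hb2, hdet2]
      have hD0' : K 1 1 * K 0 0 - K 0 1 ^ 2 ≠ 0 := by rw [sq, mul_comm (K 1 1)]; exact hD0
      field_simp
      ring
    rw [he, sqrt_div_sq _ h00, Real.sqrt_mul hdet.le]
    ring
  -- total volume
  have hVA : volume A = ENNReal.ofReal (π / Real.sqrt D) := by
    rw [vol_eq_lintegral A hAmeas]
    rw [lintegral_congr hv1]
    rw [← ofReal_integral_eq_lintegral_ofReal
      ((integrable_sqrt_sq_sub a ha).const_mul _)
      (Filter.Eventually.of_forall (fun t =>
        mul_nonneg (div_nonneg (by positivity) h11.le) (Real.sqrt_nonneg _)))]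
    congr 1
    rw [MeasureTheory.integral_const_mul, integral_sqrt_sq_sub a ha, ha2]
    field_simp
    linear_combination hsD
  have hVAr : (volume A).toReal = π / Real.sqrt D := by
    rw [hVA, ENNReal.toReal_ofReal (by positivity)]
  -- marginal densities
  have hf1 : f₁ = fun t => 2 / (π * a^2) * Real.sqrt (a^2 - t^2) := by
    funext t
    show (volume {s : ℝ | (![t, s] : Fin 2 → ℝ) ∈ A}).toReal / (volume A).toReal = _
    rw [hv1 t, hVAr, ENNReal.toReal_ofReal
      (mul_nonneg (div_nonneg (by positivity) h11.le) (Real.sqrt_nonneg _))]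
    have hXgen : ∀ X : ℝ, (2 * Real.sqrt D / K 1 1 * X) / (π / Real.sqrt D)
        = 2 / (π * (K 1 1 / D)) * X := by
      intro X
      have h11' : K 1 1 ≠ 0 := h11.ne'
      have hD' : D ≠ 0 := hdet.ne'
      field_simp
      linear_combination X * hsD
    rw [hXgen, ha2]
  have hf2 : f₂ = fun t => 2 / (π * b^2) * Real.sqrt (b^2 - t^2) := by
    funext t
    show (volume {s : ℝ | (![s, t] : Fin 2 → ℝ) ∈ A}).toReal / (volume A).toReal = _
    rw [hv2 t, hVAr, ENNReal.toReal_ofReal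
      (mul_nonneg (div_nonneg (by positivity) h00.le) (Real.sqrt_nonneg _))]
    have hXgen : ∀ X : ℝ, (2 * Real.sqrt D / K 0 0 * X) / (π / Real.sqrt D)
        = 2 / (π * (K 0 0 / D)) * X := by
      intro X
      have h00' : K 0 0 ≠ 0 := h00.ne'
      have hD' : D ≠ 0 := hdet.ne'
      field_simp
      linear_combination X * hsD
    rw [hXgen, hb2]
  -- entropies
  have hlogb : ∀ g : ℝ → ℝ, (∫ t, g t * Real.logb 2 (g t)) = (∫ t, g t * Real.log (g t)) / Real.log 2 := by
    intro g
    rw [← MeasureTheory.integral_div]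
    congr 1; funext t
    rw [Real.logb]; ring
  have hent1 : ∫ t, f₁ t * Real.logb 2 (f₁ t) = (1/2 - Real.log (π * a)) / Real.log 2 := by
    rw [hlogb, hf1]
    rw [entropy_semicircle a ha]
  have hent2 : ∫ t, f₂ t * Real.logb 2 (f₂ t) = (1/2 - Real.log (π * b)) / Real.log 2 := by
    rw [hlogb, hf2]
    rw [entropy_semicircle b hb]
  rw [hent1, hent2, hVAr]
  -- final arithmetic
  have hlog2 : Real.log 2 ≠ 0 := ne_of_gt (Real.log_pos (by norm_num))
  have habsD : a * b * Real.sqrt D = Real.sqrt (K 0 0 * K 1 1 / D) := by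
    rw [haa, hbb, ← Real.sqrt_mul (by positivity), ← Real.sqrt_mul (by positivity)]
    congr 1
    field_simp
  have hKpos : 0 < K 0 0 * K 1 1 / D := by positivity
  simp only [Real.logb]
  rw [show -((1/2 - Real.log (π * a)) / Real.log 2) + -((1/2 - Real.log (π * b)) / Real.log 2)
      - Real.log (π / Real.sqrt D) / Real.log 2
      = (Real.log (π * a) + Real.log (π * b) - Real.log (π / Real.sqrt D) - 1) / Real.log 2 from
    by ring]
  congr 1
  have hsK : 0 < Real.sqrt (K 0 0 * K 1 1 / D) := Real.sqrt_pos.mpr (by positivity)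
  rw [Real.log_mul hpi.ne' ha.ne', Real.log_mul hpi.ne' hb.ne',
    Real.log_div hpi.ne' hsD0.ne',
    Real.log_mul (by positivity : π * (Real.exp 1)⁻¹ ≠ 0) hsK.ne',
    Real.log_mul hpi.ne' (by positivity : (Real.exp 1)⁻¹ ≠ 0),
    Real.log_inv, Real.log_exp, ← habsD,
    Real.log_mul (by positivity : a * b ≠ 0) hsD0.ne',
    Real.log_mul ha.ne' hb.ne']
  ring
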